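/- Under the stated setting, if m̃ ∈ ℝ^N is any vector of approximate moments and w̃ = D V m̃ the corresponding approximate weights, then ‖w − w̃‖₁ ≤ √(λ(B)) · ‖m − m̃‖₂, where w = D V m. -/

import Mathlib

open MeasureTheory MvPolynomial

/-- Moment-perturbation stability: if `w̃ = D V m̃` are the approximate weights
corresponding to approximate moments `m̃`, then
`‖w − w̃‖₁ ≤ √(λ(B)) ‖m − m̃‖₂`. -/
theorem cheap_rule_perturbed_weights_bound {d n M N : ℕ} (hMN : N ≤ M)
    (hN : N = Nat.choose (n + d) d)
    (μ lam : Measure (Fin d → ℝ)) [IsFiniteMeasure μ] [IsFiniteMeasure lam]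
    (Ω B : Set (Fin d → ℝ))
    (p : Fin N → MvPolynomial (Fin d) ℝ)
    (hdeg : ∀ j, (p j).totalDegree ≤ n)
    (horth : ∀ h k, ∫ x in B, eval x (p h) * eval x (p k) ∂lam
      = if h = k then 1 else 0)
    (X : Fin M → (Fin d → ℝ)) (u : Fin M → ℝ)
    (hX : ∀ i, X i ∈ B) (hu : ∀ i, 0 < u i)
    (hquad : ∀ q : MvPolynomial (Fin d) ℝ, q.totalDegree ≤ 2 * n →
      ∫ x in B, eval x q ∂lam = ∑ i, u i * eval (X i) q)
    (m : Fin N → ℝ) (hm : ∀ j, m j = ∫ x in Ω, eval x (p j) ∂μ)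
    (mt : Fin N → ℝ)
    (w : Fin M → ℝ) (hw : ∀ i, w i = u i * ∑ j, eval (X i) (p j) * m j)
    (wt : Fin M → ℝ) (hwt : ∀ i, wt i = u i * ∑ j, eval (X i) (p j) * mt j) :
    ∑ i, |w i - wt i|
      ≤ Real.sqrt (lam B).toReal * Real.sqrt (∑ j, (m j - mt j) ^ 2) := by
  set δ : Fin N → ℝ := fun j => m j - mt j with hδ
  set s : Fin M → ℝ := fun i => ∑ j, eval (X i) (p j) * δ j with hs
  have hdiff : ∀ i, w i - wt i = u i * s i := by
    intro i
    rw [hw, hwt, ← mul_sub, ← Finset.sum_sub_distrib]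
    congr 1
    refine Finset.sum_congr rfl fun j _ => ?_
    simp only [hδ]; ring
  have hsum_u : ∑ i, u i = (lam B).toReal := by
    have h1 := hquad 1 (by simp)
    simp only [map_one, mul_one] at h1
    rw [← h1]
    simp [MeasureTheory.setIntegral_const]
    rfl
  have hGram : ∀ h k, ∑ i, u i * (eval (X i) (p h) * eval (X i) (p k))
      = if h = k then 1 else 0 := by
    intro h k
    have hdeg2 : (p h * p k).totalDegree ≤ 2 * n := by
      refine le_trans (MvPolynomial.totalDegree_mul _ _) ?_
      have := add_le_add (hdeg h) (hdeg k); omega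
    have h2 := hquad (p h * p k) hdeg2
    simp only [eval_mul] at h2
    rw [← h2]; exact horth h k
  have hsum_us2 : ∑ i, u i * s i ^ 2 = ∑ j, δ j ^ 2 := by
    have key : ∀ i, u i * s i ^ 2
        = ∑ j, ∑ k, δ j * δ k * (u i * (eval (X i) (p j) * eval (X i) (p k))) := by
      intro i
      rw [hs]
      simp only [sq]
      rw [Finset.sum_mul_sum, Finset.mul_sum]
      refine Finset.sum_congr rfl fun j _ => ?_
      rw [Finset.mul_sum]
      refine Finset.sum_congr rfl fun k _ => ?_
      ring
    rw [Finset.sum_congr rfl fun i _ => key i, Finset.sum_comm]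
    refine Finset.sum_congr rfl fun j _ => ?_
    rw [Finset.sum_comm]
    have : ∀ k, ∑ i, δ j * δ k * (u i * (eval (X i) (p j) * eval (X i) (p k)))
        = δ j * δ k * (if j = k then 1 else 0) := by
      intro k
      rw [← hGram j k, Finset.mul_sum]
    rw [Finset.sum_congr rfl fun k _ => this k]
    simp [mul_ite, sq]
  have hCS : (∑ i, u i * |s i|) ^ 2 ≤ (∑ i, u i) * ∑ i, u i * s i ^ 2 := by
    have h3 := Finset.sum_mul_sq_le_sq_mul_sq Finset.univ
      (fun i => Real.sqrt (u i)) (fun i => Real.sqrt (u i) * |s i|)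
    have e1 : ∀ i : Fin M, Real.sqrt (u i) * (Real.sqrt (u i) * |s i|) = u i * |s i| := by
      intro i
      rw [← mul_assoc, Real.mul_self_sqrt (hu i).le]
    have e2 : ∀ i : Fin M, Real.sqrt (u i) ^ 2 = u i := fun i => Real.sq_sqrt (hu i).le
    have e3 : ∀ i : Fin M, (Real.sqrt (u i) * |s i|) ^ 2 = u i * s i ^ 2 := by
      intro i
      rw [mul_pow, Real.sq_sqrt (hu i).le, sq_abs]
    calc (∑ i, u i * |s i|) ^ 2
        = (∑ i, Real.sqrt (u i) * (Real.sqrt (u i) * |s i|)) ^ 2 := by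
          rw [Finset.sum_congr rfl fun i _ => (e1 i).symm]
      _ ≤ (∑ i, Real.sqrt (u i) ^ 2) * ∑ i, (Real.sqrt (u i) * |s i|) ^ 2 := h3
      _ = (∑ i, u i) * ∑ i, u i * s i ^ 2 := by
          rw [Finset.sum_congr rfl fun i _ => e2 i, Finset.sum_congr rfl fun i _ => e3 i]
  have habs : ∑ i, |w i - wt i| = ∑ i, u i * |s i| := by
    refine Finset.sum_congr rfl fun i _ => ?_
    rw [hdiff i, abs_mul, abs_of_pos (hu i)]
  rw [habs, ← Real.sqrt_mul ENNReal.toReal_nonneg]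
  refine Real.le_sqrt_of_sq_le ?_
  rw [← hsum_u, ← hsum_us2]
  exact hCS
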